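/- Let n ≥ 1. For an n-bit string x with Lo(x) = j, the probability that flipping a uniformly random set of k_opt = ⌊n/(j+1)⌋ distinct bits increases the LeadingOnes value is C(n-j-1, k_opt - 1)/C(n, k_opt), and consequently the expected waiting time for an improvement at fitness level j is C(n, k_opt)/C(n-j-1, k_opt-1). Summing, the expected number of evaluations for RLS_opt,LO (which always flips ⌊n/(Lo(x)+1)⌋ bits) to reach a LeadingOnes value ≥ i, starting from a uniformly random string, equals 1 + (1/2)·Σ_{j=0}^{i-1} C(n, ⌊n/(j+1)⌋)/C(n-j-1, ⌊n/(j+1)⌋ - 1). -/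

import Mathlib

/-- Number of leading ones of a bit string `x : Fin n → Bool`. -/
def loF (n : ℕ) (x : Fin n → Bool) : ℕ :=
  (Finset.univ.filter (fun i : Fin n => ∀ j ≤ i, x j = true)).card

/-- Flip the bits of `x` at the positions in `S`. -/
def flipF (n : ℕ) (S : Finset (Fin n)) (x : Fin n → Bool) : Fin n → Bool :=
  fun i => if i ∈ S then !(x i) else x i

open Finset

namespace Aux7

lemma loF_le (n : ℕ) (x : Fin n → Bool) : loF n x ≤ n := by
  classical
  simpa [loF] using (card_filter_le (univ : Finset (Fin n)) _)

lemma loF_filter (n : ℕ) (x : Fin n → Bool) :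
    (univ.filter (fun i : Fin n => ∀ j ≤ i, x j = true))
      = univ.filter (fun i : Fin n => i.val < loF n x) := by
  classical
  ext t
  simp only [mem_filter, mem_univ, true_and]
  constructor
  · intro ht
    have hsub : Finset.Iic t ⊆ univ.filter (fun i : Fin n => ∀ j ≤ i, x j = true) := by
      intro s hs
      simp only [mem_filter, mem_univ, true_and]
      intro j hj
      exact ht j (le_trans hj (Finset.mem_Iic.mp hs))
    have := Finset.card_le_card hsub
    rw [Fin.card_Iic] at this
    exact lt_of_lt_of_le (Nat.lt_succ_self _) this
  · intro ht
    by_contra h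
    have hsub : (univ.filter (fun i : Fin n => ∀ j ≤ i, x j = true)) ⊆ Finset.Iio t := by
      intro s hs
      simp only [mem_filter, mem_univ, true_and] at hs
      rw [Finset.mem_Iio]
      by_contra hts
      exact h fun j hj => hs j (le_trans hj (not_lt.mp hts))
    have := Finset.card_le_card hsub
    rw [Fin.card_Iio] at this
    exact absurd (lt_of_le_of_lt this ht) (lt_irrefl _)

lemma apply_eq_true_of_lt {n : ℕ} (x : Fin n → Bool) {t : Fin n} (h : t.val < loF n x) :
    x t = true := by
  classical
  have : t ∈ univ.filter (fun i : Fin n => i.val < loF n x) := by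
    simp [h]
  rw [← loF_filter] at this
  simp only [mem_filter, mem_univ, true_and] at this
  exact this t le_rfl

lemma apply_loF {n : ℕ} (x : Fin n → Bool) (h : loF n x < n) : x ⟨loF n x, h⟩ = false := by
  classical
  by_contra hx
  have hx' : x ⟨loF n x, h⟩ = true := by simpa using hx
  have : (⟨loF n x, h⟩ : Fin n) ∈ univ.filter (fun i : Fin n => ∀ j ≤ i, x j = true) := by
    simp only [mem_filter, mem_univ, true_and]
    intro j hj
    rcases lt_or_eq_of_le hj with h1 | h1
    · exact apply_eq_true_of_lt x h1
    · rw [h1]; exact hx'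
  rw [loF_filter] at this
  simp at this

lemma card_filter_val_lt {n j : ℕ} (h : j ≤ n) :
    (univ.filter (fun t : Fin n => t.val < j)).card = j := by
  classical
  rw [show (univ.filter (fun t : Fin n => t.val < j))
      = (univ : Finset (Fin j)).map ⟨Fin.castLE h, Fin.castLE_injective h⟩ by
    ext t
    simp only [mem_filter, mem_univ, true_and, mem_map, Function.Embedding.coeFn_mk]
    constructor
    · intro ht; exact ⟨⟨t.val, ht⟩, rfl⟩
    · rintro ⟨s, rfl⟩; exact s.isLt]
  simp

lemma loF_eq {n j : ℕ} (x : Fin n → Bool) (hj : j < n)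
    (h1 : ∀ t : Fin n, t.val < j → x t = true) (h2 : x ⟨j, hj⟩ = false) : loF n x = j := by
  classical
  have : (univ.filter (fun i : Fin n => ∀ s ≤ i, x s = true))
      = univ.filter (fun t : Fin n => t.val < j) := by
    ext t
    simp only [mem_filter, mem_univ, true_and]
    constructor
    · intro ht
      by_contra htj
      have : x ⟨j, hj⟩ = true := ht ⟨j, hj⟩ (Fin.le_def.mpr (not_lt.mp htj))
      simp [h2] at this
    · intro ht s hs
      exact h1 s (lt_of_le_of_lt hs ht)
  rw [loF, this, card_filter_val_lt hj.le]

lemma le_loF_iff {n j : ℕ} (x : Fin n → Bool) (hj : j ≤ n) :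
    j ≤ loF n x ↔ ∀ t : Fin n, t.val < j → x t = true := by
  constructor
  · intro h t ht
    exact apply_eq_true_of_lt x (lt_of_lt_of_le ht h)
  · intro h
    by_contra hl
    push_neg at hl
    have hn : loF n x < n := lt_of_lt_of_le hl hj
    have := h ⟨loF n x, hn⟩ hl
    rw [apply_loF x hn] at this
    simp at this

lemma flip_flip {n : ℕ} (S : Finset (Fin n)) (x : Fin n → Bool) :
    flipF n S (flipF n S x) = x := by
  funext t
  simp only [flipF]
  by_cases h : t ∈ S <;> simp [h]


-- S touches only positions ≥ j and contains position j: flip improves from level j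
lemma mem1 {n j : ℕ} (hj : j < n) (x : Fin n → Bool) (hx : loF n x = j)
    (S : Finset (Fin n)) (hS : ∀ t ∈ S, j ≤ t.val) (hjS : (⟨j, hj⟩ : Fin n) ∈ S) :
    j + 1 ≤ loF n (flipF n S x) := by
  rw [le_loF_iff _ hj]
  intro t ht
  rcases lt_or_eq_of_le (Nat.lt_succ_iff.mp ht) with h1 | h1
  · have htS : t ∉ S := fun hmem => absurd (hS t hmem) (not_le.mpr h1)
    simp only [flipF, if_neg htS]
    exact apply_eq_true_of_lt x (hx ▸ h1)
  · have : t = ⟨j, hj⟩ := Fin.ext h1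
    subst this
    simp only [flipF, if_pos hjS]
    have : x ⟨j, hj⟩ = false := hx ▸ apply_loF x (hx ▸ hj)
    rw [this]; rfl

lemma mem2 {n j : ℕ} (hj : j < n) (y : Fin n → Bool) (hy : j + 1 ≤ loF n y)
    (S : Finset (Fin n)) (hS : ∀ t ∈ S, j ≤ t.val) (hjS : (⟨j, hj⟩ : Fin n) ∈ S) :
    loF n (flipF n S y) = j := by
  refine loF_eq _ hj ?_ ?_
  · intro t ht
    have htS : t ∉ S := fun hmem => absurd (hS t hmem) (not_le.mpr ht)
    simp only [flipF, if_neg htS]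
    exact apply_eq_true_of_lt y (by omega)
  · simp only [flipF, if_pos hjS]
    have : y ⟨j, hj⟩ = true := apply_eq_true_of_lt y (lt_of_lt_of_le (Nat.lt_succ_self j) hy)
    rw [this]; rfl

-- positions strictly above j
lemma card_filter_val_gt {n j : ℕ} (hj : j < n) :
    (univ.filter (fun t : Fin n => j < t.val)).card = n - j - 1 := by
  classical
  have h := Finset.card_filter_add_card_filter_not
    (s := (univ : Finset (Fin n))) (p := fun t : Fin n => j < t.val)
  simp only [not_lt, card_univ, Fintype.card_fin] at h
  have h2 : (univ.filter (fun t : Fin n => t.val ≤ j)).card = j + 1 := by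
    have := card_filter_val_lt (n := n) (j := j + 1) hj
    simpa [Nat.lt_succ_iff] using this
  omega

lemma card_FC {n j k : ℕ} (hj : j < n) (hk : 1 ≤ k) :
    (((univ : Finset (Fin n)).powersetCard k).filter
        (fun S => (∀ t ∈ S, j ≤ t.val) ∧ (⟨j, hj⟩ : Fin n) ∈ S)).card
      = (n - j - 1).choose (k - 1) := by
  classical
  have key : (((univ : Finset (Fin n)).powersetCard k).filter
        (fun S => (∀ t ∈ S, j ≤ t.val) ∧ (⟨j, hj⟩ : Fin n) ∈ S)).card
      = ((univ.filter (fun t : Fin n => j < t.val)).powersetCard (k - 1)).card := by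
    refine card_nbij' (fun S => S.erase ⟨j, hj⟩) (fun U => insert ⟨j, hj⟩ U) ?_ ?_ ?_ ?_
    · intro S hS
      simp only [Finset.mem_coe, mem_filter, mem_powersetCard] at hS
      obtain ⟨⟨-, hcard⟩, hge, hmem⟩ := hS
      rw [Finset.mem_coe, mem_powersetCard]
      constructor
      · intro t ht
        rw [Finset.mem_erase] at ht
        simp only [mem_filter, mem_univ, true_and]
        rcases lt_or_eq_of_le (hge t ht.2) with h | h
        · exact h
        · exact absurd (Fin.ext h.symm) ht.1
      · rw [Finset.card_erase_of_mem hmem, hcard]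
    · intro U hU
      rw [Finset.mem_coe, mem_powersetCard] at hU
      obtain ⟨hsub, hcard⟩ := hU
      have hjU : (⟨j, hj⟩ : Fin n) ∉ U := by
        intro h
        have := hsub h
        simp only [mem_filter, mem_univ, true_and] at this
        exact absurd this (lt_irrefl j)
      simp only [Finset.mem_coe, mem_filter, mem_powersetCard]
      refine ⟨⟨Finset.subset_univ _, ?_⟩, ?_, Finset.mem_insert_self _ _⟩
      · rw [Finset.card_insert_of_notMem hjU, hcard]
        omega
      · intro t ht
        rcases Finset.mem_insert.mp ht with h | h
        · rw [h]
        · have := hsub h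
          simp only [mem_filter, mem_univ, true_and] at this
          exact this.le
    · intro S hS
      simp only [Finset.mem_coe, mem_filter, mem_powersetCard] at hS
      exact Finset.insert_erase hS.2.2
    · intro U hU
      rw [Finset.mem_coe, mem_powersetCard] at hU
      refine Finset.erase_insert ?_
      intro h
      have := hU.1 h
      simp only [mem_filter, mem_univ, true_and] at this
      exact absurd this (lt_irrefl j)
  rw [key, Finset.card_powersetCard, card_filter_val_gt hj]
section Level
variable {n : ℕ}

lemma improving_filter_eq {n j k : ℕ} (hj : j < n) (x : Fin n → Bool) (hx : loF n x = j) :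
    ((univ : Finset (Fin n)).powersetCard k).filter
        (fun S => loF n x < loF n (flipF n S x))
      = ((univ : Finset (Fin n)).powersetCard k).filter
        (fun S => (∀ t ∈ S, j ≤ t.val) ∧ (⟨j, hj⟩ : Fin n) ∈ S) := by
  classical
  apply Finset.filter_congr
  intro S _
  constructor
  · intro h
    rw [hx] at h
    have hge : j + 1 ≤ loF n (flipF n S x) := h
    have hflip : ∀ t : Fin n, t.val < j + 1 → flipF n S x t = true :=
      (le_loF_iff _ hj).mp hge
    constructor
    · intro t ht
      by_contra hlt
      push_neg at hlt
      have h1 : flipF n S x t = true := hflip t (by omega)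
      have h2 : x t = true := apply_eq_true_of_lt x (by omega)
      simp only [flipF, if_pos ht, h2] at h1
      simp at h1
    · by_contra hjS
      have h1 : flipF n S x ⟨j, hj⟩ = true := hflip _ (Nat.lt_succ_self j)
      have h2 : x ⟨j, hj⟩ = false := hx ▸ apply_loF x (hx ▸ hj)
      simp only [flipF, if_neg hjS, h2] at h1
      exact Bool.noConfusion h1
  · rintro ⟨hS, hjS⟩
    have := mem1 hj x hx S hS hjS
    omega

lemma level_lemma {n i j : ℕ} (hi : i ≤ n) (hj : j < i) (E : (Fin n → Bool) → ℝ)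
    (hrec : ∀ x, loF n x < i →
      E x = 1 + (1 / (n.choose (n / (loF n x + 1)) : ℝ)) *
        ∑ S ∈ Finset.univ.powersetCard (n / (loF n x + 1)),
          E (if loF n x ≤ loF n (flipF n S x) then flipF n S x else x)) :
    ∑ x ∈ univ.filter (fun x : Fin n → Bool => loF n x = j), E x
      = (∑ y ∈ univ.filter (fun y : Fin n → Bool => j + 1 ≤ loF n y), E y)
        + ((univ.filter (fun x : Fin n → Bool => loF n x = j)).card : ℝ)
          * ((n.choose (n / (j + 1)) : ℝ) / ((n - j - 1).choose (n / (j + 1) - 1) : ℝ)) := by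
  classical
  have hjn : j < n := lt_of_lt_of_le hj hi
  set k := n / (j + 1) with hk
  have hk1 : 1 ≤ k := (Nat.one_le_div_iff (Nat.succ_pos j)).mpr hjn
  have hkn : k ≤ n := Nat.div_le_self n (j + 1)
  have hkj : k - 1 ≤ n - j - 1 := by
    have h1 : k * (j + 1) ≤ n := Nat.div_mul_le_self n (j + 1)
    have h2 : j ≤ k * j := Nat.le_mul_of_pos_left j hk1
    rw [Nat.mul_succ] at h1
    obtain ⟨m, hm1, hm2⟩ : ∃ m, j ≤ m ∧ m + k ≤ n := ⟨k * j, h2, h1⟩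
    omega
  have hCpos : 0 < (n.choose k : ℝ) := by exact_mod_cast Nat.choose_pos hkn
  have hcpos : 0 < ((n - j - 1).choose (k - 1) : ℝ) := by exact_mod_cast Nat.choose_pos hkj
  set Xj := univ.filter (fun x : Fin n → Bool => loF n x = j) with hXj
  set Y := univ.filter (fun y : Fin n → Bool => j + 1 ≤ loF n y) with hY
  set Pk := (univ : Finset (Fin n)).powersetCard k with hPk
  set FA := Pk.filter (fun S => ∃ t ∈ S, t.val < j) with hFA
  set FB := Pk.filter (fun S => ∀ t ∈ S, j + 1 ≤ t.val) with hFB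
  set FC := Pk.filter (fun S => (∀ t ∈ S, j ≤ t.val) ∧ (⟨j, hjn⟩ : Fin n) ∈ S) with hFC
  -- the recursion, summed over Xj
  have hsum : ∑ x ∈ Xj, E x = (Xj.card : ℝ) + (1 / (n.choose k : ℝ)) *
      ∑ x ∈ Xj, ∑ S ∈ Pk, E (if loF n x ≤ loF n (flipF n S x) then flipF n S x else x) := by
    have hcong : ∀ x ∈ Xj, E x = 1 + (1 / (n.choose k : ℝ)) *
        ∑ S ∈ Pk, E (if loF n x ≤ loF n (flipF n S x) then flipF n S x else x) := by
      intro x hx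
      rw [hXj, mem_filter] at hx
      have hlo : loF n x = j := hx.2
      simpa only [hlo] using hrec x (by omega)
    rw [Finset.sum_congr rfl hcong, Finset.sum_add_distrib, Finset.sum_const,
      nsmul_eq_mul, mul_one, Finset.mul_sum]
  -- decompose the inner sum for each x ∈ Xj
  have hdecomp : ∀ x ∈ Xj,
      ∑ S ∈ Pk, E (if loF n x ≤ loF n (flipF n S x) then flipF n S x else x)
        = (FA.card : ℝ) * E x + (∑ S ∈ FB, E (flipF n S x)) + ∑ S ∈ FC, E (flipF n S x) := by
    intro x hx
    rw [hXj, mem_filter] at hx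
    have hlo : loF n x = j := hx.2
    have hsplit1 := Finset.sum_filter_add_sum_filter_not Pk (fun S => ∃ t ∈ S, t.val < j)
      (fun S => E (if loF n x ≤ loF n (flipF n S x) then flipF n S x else x))
    have hsplit2 := Finset.sum_filter_add_sum_filter_not
      (Pk.filter (fun S => ¬ ∃ t ∈ S, t.val < j)) (fun S => (⟨j, hjn⟩ : Fin n) ∈ S)
      (fun S => E (if loF n x ≤ loF n (flipF n S x) then flipF n S x else x))
    -- identify the three pieces
    have hA : ∑ S ∈ FA, E (if loF n x ≤ loF n (flipF n S x) then flipF n S x else x)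
        = (FA.card : ℝ) * E x := by
      rw [Finset.sum_congr rfl (fun S hS => ?_), Finset.sum_const, nsmul_eq_mul]
      rw [hFA, mem_filter] at hS
      obtain ⟨-, t, htS, htj⟩ := hS
      have hrej : ¬ (loF n x ≤ loF n (flipF n S x)) := by
        intro hacc
        rw [hlo] at hacc
        have : flipF n S x t = true := (le_loF_iff _ hjn.le).mp hacc t htj
        have hxt : x t = true := apply_eq_true_of_lt x (by omega)
        simp only [flipF, if_pos htS, hxt] at this
        simp at this
      rw [if_neg hrej]
    have hBc : ∀ S ∈ FB, (if loF n x ≤ loF n (flipF n S x) then flipF n S x else x)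
        = flipF n S x := by
      intro S hS
      rw [hFB, mem_filter] at hS
      have hlof : loF n (flipF n S x) = j := by
        refine loF_eq _ hjn ?_ ?_
        · intro t ht
          have htS : t ∉ S := fun hmem => by have := hS.2 t hmem; omega
          simp only [flipF, if_neg htS]
          exact apply_eq_true_of_lt x (by omega)
        · have hjS : (⟨j, hjn⟩ : Fin n) ∉ S := fun hmem => by
            have := hS.2 _ hmem; simp at this
          simp only [flipF, if_neg hjS]
          exact hlo ▸ apply_loF x (hlo ▸ hjn)
      rw [if_pos (by omega)]
    have hCc : ∀ S ∈ FC, (if loF n x ≤ loF n (flipF n S x) then flipF n S x else x)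
        = flipF n S x := by
      intro S hS
      rw [hFC, mem_filter] at hS
      have := mem1 hjn x hlo S hS.2.1 hS.2.2
      rw [if_pos (by omega)]
    have hFBeq : (Pk.filter (fun S => ¬ ∃ t ∈ S, t.val < j)).filter
        (fun S => ¬ (⟨j, hjn⟩ : Fin n) ∈ S) = FB := by
      rw [Finset.filter_filter, hFB]
      apply Finset.filter_congr
      intro S _
      constructor
      · rintro ⟨h1, h2⟩ t ht
        push_neg at h1
        have h3 := h1 t ht
        rcases Nat.lt_or_ge j t.val with h | h
        · omega
        · have ht' : t.val = j := by omega
          have heq : t = ⟨j, hjn⟩ := Fin.ext ht'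
          rw [heq] at ht
          exact absurd ht h2
      · intro h
        constructor
        · push_neg
          intro t ht
          have := h t ht; omega
        · intro hmem
          have := h _ hmem; simp at this
    have hFCeq : (Pk.filter (fun S => ¬ ∃ t ∈ S, t.val < j)).filter
        (fun S => (⟨j, hjn⟩ : Fin n) ∈ S) = FC := by
      rw [Finset.filter_filter, hFC]
      apply Finset.filter_congr
      intro S _
      constructor
      · rintro ⟨h1, h2⟩
        push_neg at h1
        exact ⟨fun t ht => by have := h1 t ht; omega, h2⟩
      · rintro ⟨h1, h2⟩
        refine ⟨?_, h2⟩
        push_neg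
        intro t ht
        have := h1 t ht; omega
    rw [← hsplit1, ← hsplit2, hFBeq, hFCeq, ← hFA, hA]
    rw [Finset.sum_congr rfl (fun S hS => by rw [hCc S hS] : ∀ S ∈ FC,
      E (if loF n x ≤ loF n (flipF n S x) then flipF n S x else x) = E (flipF n S x))]
    rw [Finset.sum_congr rfl (fun S hS => by rw [hBc S hS] : ∀ S ∈ FB,
      E (if loF n x ≤ loF n (flipF n S x) then flipF n S x else x) = E (flipF n S x))]
    ring
  -- swap sums for the B and C parts
  have hB : ∀ S ∈ FB, ∑ x ∈ Xj, E (flipF n S x) = ∑ x ∈ Xj, E x := by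
    intro S hS
    rw [hFB, mem_filter] at hS
    have hmemB : ∀ z : Fin n → Bool, loF n z = j → loF n (flipF n S z) = j := by
      intro z hz
      refine loF_eq _ hjn ?_ ?_
      · intro t ht
        have htS : t ∉ S := fun hmem => by have := hS.2 t hmem; omega
        simp only [flipF, if_neg htS]
        exact apply_eq_true_of_lt z (by omega)
      · have hjS : (⟨j, hjn⟩ : Fin n) ∉ S := fun hmem => by
          have := hS.2 _ hmem; simp at this
        simp only [flipF, if_neg hjS]
        exact hz ▸ apply_loF z (hz ▸ hjn)
    refine Finset.sum_nbij' (flipF n S) (flipF n S) ?_ ?_ ?_ ?_ ?_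
    · intro z hz
      rw [hXj, mem_filter] at hz ⊢
      exact ⟨mem_univ _, hmemB z hz.2⟩
    · intro z hz
      rw [hXj, mem_filter] at hz ⊢
      exact ⟨mem_univ _, hmemB z hz.2⟩
    · intro z _; exact flip_flip S z
    · intro z _; exact flip_flip S z
    · intro z _; rfl
  have hC : ∀ S ∈ FC, ∑ x ∈ Xj, E (flipF n S x) = ∑ y ∈ Y, E y := by
    intro S hS
    rw [hFC, mem_filter] at hS
    refine Finset.sum_nbij' (flipF n S) (flipF n S) ?_ ?_ ?_ ?_ ?_
    · intro z hz
      rw [hXj, mem_filter] at hz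
      rw [hY, mem_filter]
      exact ⟨mem_univ _, mem1 hjn z hz.2 S hS.2.1 hS.2.2⟩
    · intro z hz
      rw [hY, mem_filter] at hz
      rw [hXj, mem_filter]
      exact ⟨mem_univ _, mem2 hjn z hz.2 S hS.2.1 hS.2.2⟩
    · intro z _; exact flip_flip S z
    · intro z _; exact flip_flip S z
    · intro z _; rfl
  -- total double sum
  have htot : ∑ x ∈ Xj, ∑ S ∈ Pk, E (if loF n x ≤ loF n (flipF n S x) then flipF n S x else x)
      = ((FA.card : ℝ) + FB.card) * (∑ x ∈ Xj, E x) + (FC.card : ℝ) * ∑ y ∈ Y, E y := by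
    rw [Finset.sum_congr rfl hdecomp, Finset.sum_add_distrib, Finset.sum_add_distrib]
    rw [Finset.sum_comm (s := Xj) (t := FB), Finset.sum_comm (s := Xj) (t := FC)]
    rw [Finset.sum_congr rfl hB, Finset.sum_congr rfl hC]
    rw [Finset.sum_const, Finset.sum_const, ← Finset.mul_sum, nsmul_eq_mul, nsmul_eq_mul]
    ring
  -- the three parts partition Pk
  have hFBeq2 : (Pk.filter (fun S => ¬ ∃ t ∈ S, t.val < j)).filter
      (fun S => ¬ (⟨j, hjn⟩ : Fin n) ∈ S) = FB := by
    rw [Finset.filter_filter, hFB]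
    apply Finset.filter_congr
    intro S _
    constructor
    · rintro ⟨h1, h2⟩ t ht
      push_neg at h1
      have h3 := h1 t ht
      rcases Nat.lt_or_ge j t.val with h | h
      · omega
      · have ht' : t.val = j := by omega
        have heq : t = ⟨j, hjn⟩ := Fin.ext ht'
        rw [heq] at ht
        exact absurd ht h2
    · intro h
      constructor
      · push_neg
        intro t ht
        have := h t ht; omega
      · intro hmem
        have := h _ hmem; simp at this
  have hFCeq2 : (Pk.filter (fun S => ¬ ∃ t ∈ S, t.val < j)).filter
      (fun S => (⟨j, hjn⟩ : Fin n) ∈ S) = FC := by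
    rw [Finset.filter_filter, hFC]
    apply Finset.filter_congr
    intro S _
    constructor
    · rintro ⟨h1, h2⟩
      push_neg at h1
      exact ⟨fun t ht => by have := h1 t ht; omega, h2⟩
    · rintro ⟨h1, h2⟩
      refine ⟨?_, h2⟩
      push_neg
      intro t ht
      have := h1 t ht; omega
  have hcards : FA.card + FB.card + FC.card = n.choose k := by
    have e1 := Finset.card_filter_add_card_filter_not
      (s := Pk) (p := fun S => ∃ t ∈ S, t.val < j)
    have e2 := Finset.card_filter_add_card_filter_not
      (s := Pk.filter (fun S => ¬ ∃ t ∈ S, t.val < j))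
      (p := fun S => (⟨j, hjn⟩ : Fin n) ∈ S)
    rw [hFBeq2, hFCeq2] at e2
    have e3 : Pk.card = n.choose k := by
      rw [hPk, Finset.card_powersetCard, card_univ, Fintype.card_fin]
    rw [← hFA] at e1
    omega
  -- final algebra
  set A := ∑ x ∈ Xj, E x with hA'
  set R := ∑ y ∈ Y, E y with hR'
  set N := (Xj.card : ℝ) with hN'
  set Ca := (n.choose k : ℝ) with hCa'
  set cc := ((n - j - 1).choose (k - 1) : ℝ) with hcc'
  have hcFC : (FC.card : ℝ) = cc := by
    rw [hcc', hFC, hPk]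
    exact Nat.cast_inj.mpr (card_FC hjn hk1)
  rw [htot, hcFC] at hsum
  have hab : (FA.card : ℝ) + FB.card = Ca - cc := by
    have : ((FA.card + FB.card + FC.card : ℕ) : ℝ) = Ca := by
      rw [hcards]
    push_cast at this
    rw [← hcFC]
    linarith
  rw [hab] at hsum
  have hsum2 : Ca * A = Ca * N + (Ca - cc) * A + cc * R := by
    calc Ca * A = Ca * (N + 1 / Ca * ((Ca - cc) * A + cc * R)) := by rw [← hsum]
    _ = Ca * N + (Ca * (1 / Ca)) * ((Ca - cc) * A + cc * R) := by ring
    _ = Ca * N + 1 * ((Ca - cc) * A + cc * R) := by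
        rw [mul_one_div, div_self (ne_of_gt hCpos)]
    _ = Ca * N + (Ca - cc) * A + cc * R := by ring
  have hstep : cc * A = Ca * N + cc * R := by linear_combination hsum2
  have hccne : cc ≠ 0 := ne_of_gt hcpos
  have h3 : A - R = N * Ca / cc := by
    rw [eq_div_iff hccne]
    linear_combination hstep
  rw [mul_div_assoc] at h3
  linarith [h3]

end Level

section Counting
variable {n : ℕ}

lemma card_level {n j : ℕ} (hj : j < n) :
    (univ.filter (fun x : Fin n → Bool => loF n x = j)).card
      = (univ.filter (fun y : Fin n → Bool => j + 1 ≤ loF n y)).card := by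
  classical
  have hS : ∀ t ∈ ({(⟨j, hj⟩ : Fin n)} : Finset (Fin n)), j ≤ t.val := by
    intro t ht
    rw [Finset.mem_singleton] at ht
    rw [ht]
  have hjS : (⟨j, hj⟩ : Fin n) ∈ ({(⟨j, hj⟩ : Fin n)} : Finset (Fin n)) :=
    Finset.mem_singleton_self _
  refine card_nbij' (flipF n {⟨j, hj⟩}) (flipF n {⟨j, hj⟩}) ?_ ?_ ?_ ?_
  · intro z hz
    rw [Finset.mem_coe, mem_filter] at hz ⊢
    exact ⟨mem_univ _, mem1 hj z hz.2 _ hS hjS⟩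
  · intro z hz
    rw [Finset.mem_coe, mem_filter] at hz ⊢
    exact ⟨mem_univ _, mem2 hj z hz.2 _ hS hjS⟩
  · intro z _; exact flip_flip _ z
  · intro z _; exact flip_flip _ z

lemma filter_lo_split {n j : ℕ} :
    (univ.filter (fun x : Fin n → Bool => j ≤ loF n x))
      = (univ.filter (fun x : Fin n → Bool => loF n x = j))
        ∪ (univ.filter (fun x : Fin n → Bool => j + 1 ≤ loF n x)) := by
  classical
  ext x
  simp only [mem_filter, Finset.mem_union, mem_univ, true_and]
  omega

lemma filter_lo_disj {n j : ℕ} :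
    Disjoint (univ.filter (fun x : Fin n → Bool => loF n x = j))
      (univ.filter (fun x : Fin n → Bool => j + 1 ≤ loF n x)) := by
  classical
  rw [Finset.disjoint_left]
  intro x h1 h2
  rw [mem_filter] at h1 h2
  omega

lemma card_Y {n : ℕ} : ∀ d j, j + d = n →
    (univ.filter (fun y : Fin n → Bool => j ≤ loF n y)).card = 2 ^ d := by
  classical
  intro d
  induction d with
  | zero =>
    intro j hj
    subst hj
    simp only [Nat.add_zero, pow_zero]
    rw [Finset.card_eq_one]
    refine ⟨fun _ => true, ?_⟩
    ext y
    simp only [mem_filter, mem_univ, true_and, Finset.mem_singleton]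
    constructor
    · intro h
      funext t
      exact apply_eq_true_of_lt y (lt_of_lt_of_le t.isLt h)
    · intro h
      subst h
      rw [le_loF_iff _ le_rfl]
      intro t _
      rfl
  | succ d ih =>
    intro j hj
    have hjn : j < n := by omega
    rw [filter_lo_split, Finset.card_union_of_disjoint filter_lo_disj,
      card_level hjn, ih (j + 1) (by omega)]
    ring

end Counting

section MainInd

lemma main_ind {n i : ℕ} (hi : i ≤ n) (E : (Fin n → Bool) → ℝ)
    (hopt : ∀ x, i ≤ loF n x → E x = 0)
    (hrec : ∀ x, loF n x < i →
      E x = 1 + (1 / (n.choose (n / (loF n x + 1)) : ℝ)) *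
        ∑ S ∈ Finset.univ.powersetCard (n / (loF n x + 1)),
          E (if loF n x ≤ loF n (flipF n S x) then flipF n S x else x)) :
    ∀ d j, j + d = i →
      ∑ y ∈ univ.filter (fun y : Fin n → Bool => j ≤ loF n y), E y
        = ∑ m ∈ Finset.Ico j i, (2:ℝ) ^ (n - 1 - m) * 2 ^ (m - j) *
            ((n.choose (n / (m + 1)) : ℝ) / ((n - m - 1).choose (n / (m + 1) - 1) : ℝ)) := by
  classical
  intro d
  induction d with
  | zero =>
    intro j hj
    have hji : j = i := by omega
    subst hji
    rw [Finset.Ico_self, Finset.sum_empty]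
    apply Finset.sum_eq_zero
    intro y hy
    rw [mem_filter] at hy
    exact hopt y hy.2
  | succ d ih =>
    intro j hj
    have hji : j < i := by omega
    have hjn : j < n := by omega
    rw [filter_lo_split, Finset.sum_union filter_lo_disj]
    rw [level_lemma hi hji E hrec]
    rw [ih (j + 1) (by omega)]
    have hN : ((univ.filter (fun x : Fin n → Bool => loF n x = j)).card : ℝ)
        = 2 ^ (n - 1 - j) := by
      rw [card_level hjn, card_Y (n - (j + 1)) (j + 1) (by omega)]
      push_cast
      rw [show n - (j + 1) = n - 1 - j from by omega]
    rw [hN]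
    rw [Finset.sum_eq_sum_Ico_succ_bot hji]
    have hsum2 : ∑ m ∈ Finset.Ico (j + 1) i, (2:ℝ) ^ (n - 1 - m) * 2 ^ (m - j) *
          ((n.choose (n / (m + 1)) : ℝ) / ((n - m - 1).choose (n / (m + 1) - 1) : ℝ))
        = ∑ m ∈ Finset.Ico (j + 1) i, 2 * ((2:ℝ) ^ (n - 1 - m) * 2 ^ (m - (j + 1)) *
            ((n.choose (n / (m + 1)) : ℝ) / ((n - m - 1).choose (n / (m + 1) - 1) : ℝ))) := by
      apply Finset.sum_congr rfl
      intro m hm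
      rw [Finset.mem_Ico] at hm
      rw [show m - j = (m - (j + 1)) + 1 from by omega, pow_succ]
      ring
    rw [hsum2, ← Finset.mul_sum]
    rw [show j - j = 0 from by omega, pow_zero]
    ring

end MainInd

end Aux7

/-- At fitness level `j`, flipping `k = ⌊n/(j+1)⌋` uniformly random distinct bits
improves LeadingOnes with probability `C(n-j-1,k-1)/C(n,k)`; the waiting time is the
reciprocal; and `RLS_opt,LO` started from a uniformly random string reaches fitness
at least `i` after `1 + (1/2)·∑_{j<i} C(n,⌊n/(j+1)⌋)/C(n-j-1,⌊n/(j+1)⌋-1)` evaluations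
in expectation, where `E x` is the expected number of further iterations from `x`. -/
theorem stmt7 (n i : ℕ) (hn : 1 ≤ n) (hi : i ≤ n) (E : (Fin n → Bool) → ℝ)
    (hopt : ∀ x, i ≤ loF n x → E x = 0)
    (hrec : ∀ x, loF n x < i →
      E x = 1 + (1 / (n.choose (n / (loF n x + 1)) : ℝ)) *
        ∑ S ∈ Finset.univ.powersetCard (n / (loF n x + 1)),
          E (if loF n x ≤ loF n (flipF n S x) then flipF n S x else x)) :
    (∀ x : Fin n → Bool, loF n x < n →
      (((Finset.univ.powersetCard (n / (loF n x + 1))).filter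
          (fun S : Finset (Fin n) => loF n x < loF n (flipF n S x))).card : ℝ)
          / (n.choose (n / (loF n x + 1)) : ℝ)
        = ((n - loF n x - 1).choose (n / (loF n x + 1) - 1) : ℝ)
          / (n.choose (n / (loF n x + 1)) : ℝ)) ∧
    (∀ j : ℕ, j < n →
      (n.choose (n / (j + 1)) : ℝ) / ((n - j - 1).choose (n / (j + 1) - 1) : ℝ)
        = (((n - j - 1).choose (n / (j + 1) - 1) : ℝ) / (n.choose (n / (j + 1)) : ℝ))⁻¹) ∧
    1 + (1 / (2 : ℝ) ^ n) * ∑ x : Fin n → Bool, E x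
      = 1 + (1 / 2 : ℝ) * ∑ j ∈ Finset.range i,
          (n.choose (n / (j + 1)) : ℝ) / ((n - j - 1).choose (n / (j + 1) - 1) : ℝ) := by
  classical
  refine ⟨?_, ?_, ?_⟩
  · intro x hx
    have hk1 : 1 ≤ n / (loF n x + 1) := (Nat.one_le_div_iff (Nat.succ_pos _)).mpr hx
    rw [Aux7.improving_filter_eq hx x rfl, Aux7.card_FC hx hk1]
  · intro j _
    rw [inv_div]
  · have h0 := Aux7.main_ind hi E hopt hrec i 0 (by omega)
    have huniv : (Finset.univ.filter (fun y : Fin n → Bool => 0 ≤ loF n y)) = Finset.univ :=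
      Finset.filter_true_of_mem (fun _ _ => Nat.zero_le _)
    rw [huniv] at h0
    rw [h0, Nat.Ico_zero_eq_range]
    have hterm : ∀ m ∈ Finset.range i, (2:ℝ) ^ (n - 1 - m) * 2 ^ (m - 0) *
          ((n.choose (n / (m + 1)) : ℝ) / ((n - m - 1).choose (n / (m + 1) - 1) : ℝ))
        = (2:ℝ) ^ (n - 1) *
          ((n.choose (n / (m + 1)) : ℝ) / ((n - m - 1).choose (n / (m + 1) - 1) : ℝ)) := by
      intro m hm
      rw [Finset.mem_range] at hm
      rw [Nat.sub_zero, ← pow_add, show n - 1 - m + m = n - 1 from by omega]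
    rw [Finset.sum_congr rfl hterm, ← Finset.mul_sum]
    have h2n : (2:ℝ) ^ n = 2 * 2 ^ (n - 1) := by
      rw [← pow_succ']
      congr 1
      omega
    rw [h2n]
    have hne : (2:ℝ) ^ (n - 1) ≠ 0 := pow_ne_zero _ two_ne_zero
    congr 1
    field_simp
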